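/- Let 0 < λ₂ ≤ λ_N be real numbers. Consider, for real parameters ε₀, ε₁, θ₀ and for λ ∈ {λ₂, λ_N}, the quadratic polynomial p(z, λ) = z² + (ε₀λ − 1 − θ₀)z + (ε₁λ + θ₀) over ℂ. Then the set of all r ≥ 0 such that there exist real ε₀, ε₁, θ₀ for which every complex root of p(z, λ₂) and every complex root of p(z, λ_N) has modulus at most r, has a least element, and this least element equals (√λ_N − √λ₂)/(√λ_N + √λ₂). -/

import Mathlib

private lemma key_roots (b c r : ℝ) (hr : 0 ≤ r)
    (h : ∀ z : ℂ, z ^ 2 + (b : ℂ) * z + (c : ℂ) = 0 → ‖z‖ ≤ r) :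
    1 + b + c ≤ (1 + r) ^ 2 ∧ (r < 1 → (1 - r) ^ 2 ≤ 1 + b + c) := by
  rcases le_or_gt (4 * c) (b ^ 2) with hd | hd
  · -- real roots
    set s := Real.sqrt (b ^ 2 - 4 * c) with hs_def
    have hs : s ^ 2 = b ^ 2 - 4 * c := Real.sq_sqrt (by linarith)
    set x1 := (-b + s) / 2 with hx1_def
    set x2 := (-b - s) / 2 with hx2_def
    have hx1 : x1 ^ 2 + b * x1 + c = 0 := by
      rw [hx1_def]; linear_combination hs / 4
    have hx2 : x2 ^ 2 + b * x2 + c = 0 := by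
      rw [hx2_def]; linear_combination hs / 4
    have hb1 : ‖(x1 : ℂ)‖ ≤ r := by
      apply h
      have : ((x1 ^ 2 + b * x1 + c : ℝ) : ℂ) = 0 := by rw [hx1]; norm_num
      push_cast at this; linear_combination this
    have hb2 : ‖(x2 : ℂ)‖ ≤ r := by
      apply h
      have : ((x2 ^ 2 + b * x2 + c : ℝ) : ℂ) = 0 := by rw [hx2]; norm_num
      push_cast at this; linear_combination this
    rw [Complex.norm_real, Real.norm_eq_abs] at hb1 hb2
    have h1 : -r ≤ x1 ∧ x1 ≤ r := abs_le.mp hb1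
    have h2 : -r ≤ x2 ∧ x2 ≤ r := abs_le.mp hb2
    have hsum : x1 + x2 = -b := by rw [hx1_def, hx2_def]; ring
    have hprod : x1 * x2 = c := by
      rw [hx1_def, hx2_def]; linear_combination (-1/4 : ℝ) * hs
    constructor
    · nlinarith [mul_nonneg (by linarith [h1.2] : (0:ℝ) ≤ r - x1) (by linarith [h2.2] : (0:ℝ) ≤ r - x2),
        mul_nonneg (by linarith [h1.1] : (0:ℝ) ≤ r + x1) (by linarith [h2.1] : (0:ℝ) ≤ r + x2),
        mul_nonneg (by linarith [h1.2] : (0:ℝ) ≤ r - x1) (by linarith [h2.1] : (0:ℝ) ≤ r + x2),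
        mul_nonneg (by linarith [h1.1] : (0:ℝ) ≤ r + x1) (by linarith [h2.2] : (0:ℝ) ≤ r - x2)]
    · intro hr1
      nlinarith [mul_nonneg (by linarith [h1.2] : (0:ℝ) ≤ r - x1) (by linarith [h2.2] : (0:ℝ) ≤ r - x2),
        mul_nonneg (by linarith [h1.2] : (0:ℝ) ≤ r - x1) (by linarith [h2.2, hr1] : (0:ℝ) ≤ 1 - x2),
        mul_nonneg (by linarith [h1.2, hr1] : (0:ℝ) ≤ 1 - x1) (by linarith [h2.2] : (0:ℝ) ≤ r - x2)]
  · -- complex roots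
    set t := Real.sqrt (4 * c - b ^ 2) with ht_def
    have ht : t ^ 2 = 4 * c - b ^ 2 := Real.sq_sqrt (by linarith)
    have htc : ((t : ℝ) : ℂ) ^ 2 = 4 * (c : ℂ) - (b : ℂ) ^ 2 := by exact_mod_cast ht
    set z : ℂ := (-(b / 2 : ℝ) : ℂ) + ((t / 2 : ℝ) : ℂ) * Complex.I with hz_def
    have hzeq : z ^ 2 + (b : ℂ) * z + (c : ℂ) = 0 := by
      rw [hz_def]; push_cast
      linear_combination (Complex.I ^ 2 / 4) * htc + ((4 * (c:ℂ) - (b:ℂ) ^ 2) / 4) * Complex.I_sq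
    have habs : ‖z‖ ≤ r := h z hzeq
    have hns : Complex.normSq z = c := by
      rw [hz_def]
      simp [Complex.normSq_apply]
      nlinarith [ht]
    have hcr : c ≤ r ^ 2 := by
      have := Complex.sq_norm z
      rw [hns] at this
      nlinarith [habs, norm_nonneg z]
    have hb : b ^ 2 ≤ 4 * r ^ 2 := by nlinarith
    have hble : -(2*r) ≤ b ∧ b ≤ 2*r := by constructor <;> nlinarith
    constructor
    · nlinarith [hble.2]
    · intro hr1
      nlinarith [mul_nonneg (by linarith [hble.1] : (0:ℝ) ≤ b / 2 + r) (by linarith [hble.1] : (0:ℝ) ≤ 2 + b / 2 - r)]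

theorem stmt_0 (lam2 lamN : ℝ) (h2 : 0 < lam2) (h2N : lam2 ≤ lamN) :
    IsLeast
      {r : ℝ | 0 ≤ r ∧ ∃ ε₀ ε₁ θ₀ : ℝ,
        (∀ z : ℂ, z ^ 2 + ((ε₀ * lam2 - 1 - θ₀ : ℝ) : ℂ) * z + ((ε₁ * lam2 + θ₀ : ℝ) : ℂ) = 0 →
          ‖z‖ ≤ r) ∧
        (∀ z : ℂ, z ^ 2 + ((ε₀ * lamN - 1 - θ₀ : ℝ) : ℂ) * z + ((ε₁ * lamN + θ₀ : ℝ) : ℂ) = 0 →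
          ‖z‖ ≤ r)}
      ((Real.sqrt lamN - Real.sqrt lam2) / (Real.sqrt lamN + Real.sqrt lam2)) := by
  have hN : 0 < lamN := lt_of_lt_of_le h2 h2N
  set S2 := Real.sqrt lam2 with hS2_def
  set SN := Real.sqrt lamN with hSN_def
  have hS2 : 0 < S2 := Real.sqrt_pos.mpr h2
  have hSN : 0 < SN := Real.sqrt_pos.mpr hN
  have hle : S2 ≤ SN := Real.sqrt_le_sqrt h2N
  have hsq2 : S2 ^ 2 = lam2 := Real.sq_sqrt h2.le
  have hsqN : SN ^ 2 = lamN := Real.sq_sqrt hN.le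
  have hden : 0 < SN + S2 := by linarith
  set R := (SN - S2) / (SN + S2) with hR_def
  have hR0 : 0 ≤ R := div_nonneg (by linarith) hden.le
  have hR1 : R < 1 := by
    rw [hR_def, div_lt_one hden]; linarith
  constructor
  · -- membership
    refine ⟨hR0, 4 / (S2 + SN) ^ 2, 0, R ^ 2, ?_, ?_⟩
    · intro z hz
      have hb : 4 / (S2 + SN) ^ 2 * lam2 - 1 - R ^ 2 = -(2 * R) := by
        rw [hR_def, ← hsq2]
        field_simp
        ring
      have hc : (0 : ℝ) * lam2 + R ^ 2 = R ^ 2 := by ring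
      rw [hb, hc] at hz
      push_cast at hz
      have hsq : (z - (R : ℂ)) ^ 2 = 0 := by linear_combination hz
      have hzr : z = (R : ℂ) := sub_eq_zero.mp (pow_eq_zero_iff two_ne_zero |>.mp hsq)
      rw [hzr, Complex.norm_real, Real.norm_eq_abs, abs_of_nonneg hR0]
    · intro z hz
      have hb : 4 / (S2 + SN) ^ 2 * lamN - 1 - R ^ 2 = 2 * R := by
        rw [hR_def, ← hsqN]
        field_simp
        ring
      have hc : (0 : ℝ) * lamN + R ^ 2 = R ^ 2 := by ring
      rw [hb, hc] at hz
      push_cast at hz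
      have hsq : (z + (R : ℂ)) ^ 2 = 0 := by linear_combination hz
      have hzr : z = -(R : ℂ) := by
        have := pow_eq_zero_iff two_ne_zero |>.mp hsq
        linear_combination this
      rw [hzr]
      simp [abs_of_nonneg hR0]
  · -- lower bound
    rintro r ⟨hr, ε₀, ε₁, θ₀, hroots2, hrootsN⟩
    have k2 := key_roots (ε₀ * lam2 - 1 - θ₀) (ε₁ * lam2 + θ₀) r hr hroots2
    have kN := key_roots (ε₀ * lamN - 1 - θ₀) (ε₁ * lamN + θ₀) r hr hrootsN
    rcases lt_or_ge r 1 with hr1 | hr1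
    · have l2 : (1 - r) ^ 2 ≤ (ε₀ + ε₁) * lam2 := by
        have := k2.2 hr1; linarith [this]
      have uN : (ε₀ + ε₁) * lamN ≤ (1 + r) ^ 2 := by
        linarith [kN.1]
      have hkey : (1 - r) ^ 2 * lamN ≤ (1 + r) ^ 2 * lam2 := by
        nlinarith [mul_le_mul_of_nonneg_right l2 hN.le,
          mul_le_mul_of_nonneg_right uN h2.le]
      have hsrt : (1 - r) * SN ≤ (1 + r) * S2 := by
        nlinarith [mul_nonneg (by linarith : (0:ℝ) ≤ 1 - r) hSN.le,
          mul_pos (by linarith : (0:ℝ) < 1 + r) hS2]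
      rw [hR_def, div_le_iff₀ hden]
      nlinarith [hsrt]
    · linarith [hR1]
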